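/- Let σ>0 and C₀>0, and let f,g:ℝ³→ℝ be measurable functions with |f(x)|≤C₀e^{−σ|x|} and |g(x)|≤C₀e^{−σ|x|} for all x∈ℝ³. Then there exist constants γ>0 and C>0, depending only on σ and C₀, such that for all ε>0 and all y,z∈ℝ³: ∫_{ℝ³}|f((x−y)/ε)|·|g((x−z)/ε)| dx ≤ C ε³ e^{−γ|y−z|/ε}. -/

import Mathlib

open MeasureTheory Metric Real Filter Set

noncomputable section

abbrev E3 : Type := EuclideanSpace ℝ (Fin 3)

lemma exp_abs_integrable1d {c : ℝ} (hc : 0 < c) :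
    Integrable (fun t : ℝ => Real.exp (-c * |t|)) := by
  set F : ℝ → ℝ := fun t => Real.exp (-c * |t|) with hF
  have hcont : Continuous F := by
    apply Real.continuous_exp.comp
    exact continuous_const.mul continuous_abs
  have h1 : Integrable (Set.indicator (Ici (0:ℝ)) F) := by
    rw [integrable_indicator_iff measurableSet_Ici]
    rw [integrableOn_Ici_iff_integrableOn_Ioi]
    exact (exp_neg_integrableOn_Ioi 0 hc).congr_fun
      (fun t ht => by simp [hF, abs_of_pos (mem_Ioi.mp ht)]) measurableSet_Ioi
  have h2 : Integrable (fun t : ℝ => Set.indicator (Ici (0:ℝ)) F (-t)) := h1.comp_neg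
  have h2' : (fun t : ℝ => Set.indicator (Ici (0:ℝ)) F (-t))
      = Set.indicator (Iic (0:ℝ)) F := by
    ext t
    by_cases ht : t ≤ 0
    · simp [Set.indicator_apply, ht, neg_nonneg, hF, abs_neg]
    · simp [Set.indicator_apply, ht, neg_nonneg, hF]
  rw [h2'] at h2
  refine (h1.add h2).mono' hcont.aestronglyMeasurable ?_
  filter_upwards with t
  rw [Real.norm_eq_abs, abs_of_pos (Real.exp_pos _)]
  rcases le_or_gt 0 t with ht | ht
  · have : Set.indicator (Ici (0:ℝ)) F t = F t := Set.indicator_of_mem (mem_Ici.2 ht) F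
    have h0 : 0 ≤ Set.indicator (Iic (0:ℝ)) F t :=
      Set.indicator_nonneg (fun s _ => (Real.exp_pos _).le) t
    simp only [Pi.add_apply, this]
    linarith
  · have : Set.indicator (Iic (0:ℝ)) F t = F t := Set.indicator_of_mem (mem_Iic.2 ht.le) F
    have h0 : 0 ≤ Set.indicator (Ici (0:ℝ)) F t :=
      Set.indicator_nonneg (fun s _ => (Real.exp_pos _).le) t
    simp only [Pi.add_apply, this]
    linarith

lemma exp_norm_integrable3d {c : ℝ} (hc : 0 < c) :
    Integrable (fun u : E3 => Real.exp (-c * ‖u‖)) := by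
  have hprod : Integrable (fun u : E3 => ∏ i : Fin 3, Real.exp (-(c/3) * |u i|)) := by
    have hpi : Integrable (fun y : (Fin 3 → ℝ) => ∏ i : Fin 3, Real.exp (-(c/3) * |y i|)) :=
      Integrable.fintype_prod (f := fun _ : Fin 3 => fun t : ℝ => Real.exp (-(c/3) * |t|))
        (fun _ => exp_abs_integrable1d (by linarith))
    have hmp := EuclideanSpace.volume_preserving_symm_measurableEquiv_toLp (Fin 3)
    have := (hmp.integrable_comp_emb (MeasurableEquiv.measurableEmbedding _)).mpr hpi
    exact this
  refine hprod.mono' ?_ ?_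
  · exact (Continuous.measurable (by continuity)).aestronglyMeasurable
  · filter_upwards with u
    rw [Real.norm_eq_abs, abs_of_pos (Real.exp_pos _)]
    have hcoord : ∀ i : Fin 3, |u i| ≤ ‖u‖ := by
      intro i
      rw [EuclideanSpace.norm_eq, ← Real.sqrt_sq_eq_abs]
      apply Real.sqrt_le_sqrt
      have := Finset.single_le_sum (f := fun j : Fin 3 => ‖u j‖ ^ 2)
        (fun j _ => sq_nonneg _) (Finset.mem_univ i)
      simpa [Real.norm_eq_abs, sq_abs] using this
    have hsum : (∑ i : Fin 3, |u i|) ≤ 3 * ‖u‖ := by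
      calc (∑ i : Fin 3, |u i|) ≤ ∑ _i : Fin 3, ‖u‖ :=
            Finset.sum_le_sum (fun i _ => hcoord i)
        _ = 3 * ‖u‖ := by simp
    rw [← Real.exp_sum]
    apply Real.exp_le_exp.2
    rw [show (∑ i : Fin 3, -(c / 3) * |u i|) = -(c/3) * ∑ i : Fin 3, |u i| from
      (Finset.mul_sum _ _ _).symm]
    nlinarith [hsum]

/-- interaction estimate between two exponentially decaying profiles
rescaled by `ε` and centered at `y` and `z`: there are `γ, C > 0`, depending only on
`σ` and `C₀`, such that for all such `f, g`, all `ε > 0` and all `y, z ∈ ℝ³`,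
`∫ |f((x−y)/ε)|·|g((x−z)/ε)| dx ≤ C·ε³·e^{−γ|y−z|/ε}`. -/
theorem stmt_14 (σ C₀ : ℝ) (hσ : 0 < σ) (hC₀ : 0 < C₀) :
    ∃ γ > 0, ∃ C > 0, ∀ f g : E3 → ℝ, Measurable f → Measurable g →
      (∀ x : E3, |f x| ≤ C₀ * Real.exp (-σ * ‖x‖)) →
      (∀ x : E3, |g x| ≤ C₀ * Real.exp (-σ * ‖x‖)) →
      ∀ ε : ℝ, 0 < ε → ∀ y z : E3,
        (∫ x : E3, |f (ε⁻¹ • (x - y))| * |g (ε⁻¹ • (x - z))|) ≤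
          C * ε ^ 3 * Real.exp (-γ * dist y z / ε) := by
  set I : ℝ := ∫ u : E3, Real.exp (-(σ/2) * ‖u‖) with hI
  have hint : Integrable (fun u : E3 => Real.exp (-(σ/2) * ‖u‖)) :=
    exp_norm_integrable3d (by linarith)
  have hIpos : 0 < I := by
    rw [hI]
    apply (integral_pos_iff_support_of_nonneg_ae ?_ hint).2
    · have : Function.support (fun u : E3 => Real.exp (-(σ/2) * ‖u‖)) = Set.univ := by
        ext u; simp [Function.mem_support, (Real.exp_pos _).ne']
      rw [this]
      simp
    · filter_upwards with u; positivity
  refine ⟨σ/2, by linarith, C₀^2 * I, by positivity, ?_⟩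
  intro f g hf hg hfb hgb ε hε y z
  set d : ℝ := dist y z with hd
  have hd0 : 0 ≤ d := dist_nonneg
  set h : E3 → ℝ := fun x => (C₀^2 * Real.exp (-(σ/2) * (d / ε))) *
      Real.exp (-(σ/2) * ‖ε⁻¹ • (x - y)‖) with hh
  have hhint : Integrable h := by
    apply Integrable.const_mul
    have h1 : Integrable (fun x : E3 => Real.exp (-(σ/2) * ‖ε⁻¹ • x‖)) :=
      (integrable_comp_smul_iff volume (fun u : E3 => Real.exp (-(σ/2) * ‖u‖))
        (inv_ne_zero hε.ne')).2 hint
    exact h1.comp_sub_right y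
  have hle : ∀ x : E3, |f (ε⁻¹ • (x - y))| * |g (ε⁻¹ • (x - z))| ≤ h x := by
    intro x
    set a : ℝ := ‖ε⁻¹ • (x - y)‖ with ha
    set b : ℝ := ‖ε⁻¹ • (x - z)‖ with hb
    have ha0 : 0 ≤ a := norm_nonneg _
    have hb0 : 0 ≤ b := norm_nonneg _
    have hab : d / ε ≤ a + b := by
      have h1 : a = ε⁻¹ * ‖x - y‖ := by
        rw [ha, norm_smul, Real.norm_eq_abs, abs_of_pos (inv_pos.2 hε)]
      have h2 : b = ε⁻¹ * ‖x - z‖ := by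
        rw [hb, norm_smul, Real.norm_eq_abs, abs_of_pos (inv_pos.2 hε)]
      have htri : d ≤ ‖x - y‖ + ‖x - z‖ := by
        rw [hd, dist_eq_norm]
        calc ‖y - z‖ = ‖(y - x) + (x - z)‖ := by abel_nf
          _ ≤ ‖y - x‖ + ‖x - z‖ := norm_add_le _ _
          _ = ‖x - y‖ + ‖x - z‖ := by rw [norm_sub_rev]
      rw [h1, h2, div_eq_inv_mul, ← mul_add]
      exact mul_le_mul_of_nonneg_left htri (le_of_lt (inv_pos.2 hε))
    calc |f (ε⁻¹ • (x - y))| * |g (ε⁻¹ • (x - z))|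
        ≤ (C₀ * Real.exp (-σ * a)) * (C₀ * Real.exp (-σ * b)) :=
          mul_le_mul (hfb _) (hgb _) (abs_nonneg _) (by positivity)
      _ = C₀^2 * Real.exp (-σ * (a + b)) := by
          rw [show -σ * (a + b) = -σ * a + -σ * b by ring, Real.exp_add]; ring
      _ ≤ C₀^2 * Real.exp (-(σ/2) * (d/ε) + -(σ/2) * a) := by
          apply mul_le_mul_of_nonneg_left _ (by positivity)
          apply Real.exp_le_exp.2
          nlinarith
      _ = h x := by
          rw [hh, Real.exp_add]; dsimp only; ring
  have hmono : (∫ x : E3, |f (ε⁻¹ • (x - y))| * |g (ε⁻¹ • (x - z))|) ≤ ∫ x : E3, h x := by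
    apply integral_mono_of_nonneg
    · filter_upwards with x; positivity
    · exact hhint
    · filter_upwards with x; exact hle x
  refine hmono.trans ?_
  have hcomp : (∫ x : E3, Real.exp (-(σ/2) * ‖ε⁻¹ • (x - y)‖)) = ε ^ 3 * I := by
    have htrans : (∫ x : E3, Real.exp (-(σ/2) * ‖ε⁻¹ • (x - y)‖))
        = ∫ x : E3, Real.exp (-(σ/2) * ‖ε⁻¹ • x‖) :=
      integral_sub_right_eq_self (fun x : E3 => Real.exp (-(σ/2) * ‖ε⁻¹ • x‖)) y
    rw [htrans]
    have := MeasureTheory.Measure.integral_comp_inv_smul_of_nonneg (volume : Measure E3)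
      (fun u : E3 => Real.exp (-(σ/2) * ‖u‖)) hε.le
    rw [this, finrank_euclideanSpace_fin, smul_eq_mul]
  have hcalc : (∫ x : E3, h x) = (C₀^2 * Real.exp (-(σ/2) * (d / ε))) * (ε ^ 3 * I) := by
    rw [hh, integral_const_mul, hcomp]
  rw [hcalc]
  have : -(σ/2) * (d / ε) = -(σ/2) * d / ε := by ring
  rw [this]
  apply le_of_eq
  ring
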